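/- There exists a d-regular bipartite graph with n = 2d-1 vertices on each side that admits a perfect matching and also admits a maximal matching of size exactly d (i.e., of size (d/(2d-1))·n). -/

import Mathlib

def IsMatching {U V : Type*} (E : U → V → Bool) (M : Finset (U × V)) : Prop :=
  (∀ p ∈ M, E p.1 p.2 = true) ∧
  (∀ p ∈ M, ∀ q ∈ M, p.1 = q.1 → p = q) ∧
  (∀ p ∈ M, ∀ q ∈ M, p.2 = q.2 → p = q)

def IsMaximalMatching {U V : Type*} (E : U → V → Bool) (M : Finset (U × V)) : Prop :=
  IsMatching E M ∧
  ∀ u v, E u v = true → (∃ p ∈ M, p.1 = u) ∨ (∃ p ∈ M, p.2 = v)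

lemma card_filter_fin' (n : ℕ) (p : ℕ → Prop) [DecidablePred p] :
    (Finset.univ.filter (fun v : Fin n => p v.val)).card
      = ((Finset.range n).filter p).card := by
  apply Finset.card_bij (fun v _ => v.val)
  · intro a ha; simp_all [a.isLt]
  · intro a _ b _ h; exact Fin.val_injective h
  · intro x hx
    simp only [Finset.mem_filter, Finset.mem_range] at hx
    exact ⟨⟨x, hx.1⟩, by simp [hx.2], rfl⟩

lemma card_filter_fin (n : ℕ) (p : ℕ → Bool) :
    (Finset.univ.filter (fun v : Fin n => p v.val = true)).card
      = ((Finset.range n).filter (fun x => p x = true)).card := by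
  apply Finset.card_bij (fun v _ => v.val)
  · intro a ha; simp_all [a.isLt]
  · intro a _ b _ h; exact Fin.val_injective h
  · intro x hx
    simp only [Finset.mem_filter, Finset.mem_range] at hx
    exact ⟨⟨x, hx.1⟩, by simp [hx.2], rfl⟩

def sig (d : ℕ) (u : Fin (2*d-1)) : Fin (2*d-1) :=
  ⟨if u.val + 1 < d then u.val + d else if u.val < d then u.val else u.val - d, by
    have := u.isLt; split_ifs <;> omega⟩

lemma sig_inj (d : ℕ) : Function.Injective (sig d) := by
  intro a b h
  have ha := a.isLt; have hb := b.isLt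
  have h' : (sig d a).val = (sig d b).val := congrArg Fin.val h
  simp only [sig] at h'
  apply Fin.val_injective
  split_ifs at h' <;> omega

theorem exists_regular_graph_with_small_maximal_matching (d : ℕ) (hd : 1 ≤ d) :
    ∃ E : Fin (2 * d - 1) → Fin (2 * d - 1) → Bool,
      (∀ u, (Finset.univ.filter (fun v => E u v = true)).card = d) ∧
      (∀ v, (Finset.univ.filter (fun u => E u v = true)).card = d) ∧
      (∃ M, IsMatching E M ∧ M.card = 2 * d - 1) ∧
      (∃ M, IsMaximalMatching E M ∧ M.card = d) := by
  refine ⟨fun u v => decide ((u.val = v.val ∧ v.val < d) ∨ (u.val < d ∧ d ≤ v.val) ∨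
      (d ≤ u.val ∧ v.val < d)), ?_, ?_, ?_, ?_⟩
  · -- U degrees
    intro u
    have hu := u.isLt
    refine Eq.trans (card_filter_fin (2*d-1) (fun x =>
      decide ((u.val = x ∧ x < d) ∨ (u.val < d ∧ d ≤ x) ∨ (d ≤ u.val ∧ x < d)))) ?_
    by_cases h : u.val < d
    · have h2 : ((Finset.range (2*d-1)).filter (fun x =>
          decide ((u.val = x ∧ x < d) ∨ (u.val < d ∧ d ≤ x) ∨ (d ≤ u.val ∧ x < d)) = true))
          = insert u.val (Finset.Ico d (2*d-1)) := by
        ext x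
        simp only [Finset.mem_filter, Finset.mem_range, Finset.mem_insert, Finset.mem_Ico,
          decide_eq_true_eq]
        omega
      rw [h2, Finset.card_insert_of_notMem (by simp [Finset.mem_Ico]; omega), Nat.card_Ico]
      omega
    · have h2 : ((Finset.range (2*d-1)).filter (fun x =>
          decide ((u.val = x ∧ x < d) ∨ (u.val < d ∧ d ≤ x) ∨ (d ≤ u.val ∧ x < d)) = true))
          = Finset.range d := by
        ext x
        simp only [Finset.mem_filter, Finset.mem_range, decide_eq_true_eq]
        omega
      rw [h2, Finset.card_range]
  · -- V degrees
    intro v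
    have hv := v.isLt
    refine Eq.trans (card_filter_fin (2*d-1) (fun x =>
      decide ((x = v.val ∧ v.val < d) ∨ (x < d ∧ d ≤ v.val) ∨ (d ≤ x ∧ v.val < d)))) ?_
    by_cases h : v.val < d
    · have h2 : ((Finset.range (2*d-1)).filter (fun x =>
          decide ((x = v.val ∧ v.val < d) ∨ (x < d ∧ d ≤ v.val) ∨ (d ≤ x ∧ v.val < d)) = true))
          = insert v.val (Finset.Ico d (2*d-1)) := by
        ext x
        simp only [Finset.mem_filter, Finset.mem_range, Finset.mem_insert, Finset.mem_Ico,
          decide_eq_true_eq]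
        omega
      rw [h2, Finset.card_insert_of_notMem (by simp [Finset.mem_Ico]; omega), Nat.card_Ico]
      omega
    · have h2 : ((Finset.range (2*d-1)).filter (fun x =>
          decide ((x = v.val ∧ v.val < d) ∨ (x < d ∧ d ≤ v.val) ∨ (d ≤ x ∧ v.val < d)) = true))
          = Finset.range d := by
        ext x
        simp only [Finset.mem_filter, Finset.mem_range, decide_eq_true_eq]
        omega
      rw [h2, Finset.card_range]
  · -- perfect matching
    refine ⟨Finset.univ.image (fun u => (u, sig d u)), ⟨?_, ?_, ?_⟩, ?_⟩
    · intro p hp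
      simp only [Finset.mem_image, Finset.mem_univ, true_and] at hp
      obtain ⟨u, rfl⟩ := hp
      have hu := u.isLt
      simp only [decide_eq_true_eq, sig]
      split_ifs <;> apply decide_eq_true <;> omega
    · intro p hp q hq h
      simp only [Finset.mem_image, Finset.mem_univ, true_and] at hp hq
      obtain ⟨u, rfl⟩ := hp; obtain ⟨w, rfl⟩ := hq
      simp_all
    · intro p hp q hq h
      simp only [Finset.mem_image, Finset.mem_univ, true_and] at hp hq
      obtain ⟨u, rfl⟩ := hp; obtain ⟨w, rfl⟩ := hq
      have := sig_inj d h
      simp_all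
    · rw [Finset.card_image_of_injective _ (fun a b h => congrArg Prod.fst h),
        Finset.card_univ, Fintype.card_fin]
  · -- maximal matching of size d
    refine ⟨(Finset.univ.filter (fun u : Fin (2*d-1) => u.val < d)).image (fun u => (u, u)),
      ⟨⟨?_, ?_, ?_⟩, ?_⟩, ?_⟩
    · intro p hp
      simp only [Finset.mem_image, Finset.mem_filter, Finset.mem_univ, true_and] at hp
      obtain ⟨u, hu, rfl⟩ := hp
      simp [hu]
    · intro p hp q hq h
      simp only [Finset.mem_image, Finset.mem_filter, Finset.mem_univ, true_and] at hp hq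
      obtain ⟨u, hu, rfl⟩ := hp; obtain ⟨w, hw, rfl⟩ := hq
      simp_all
    · intro p hp q hq h
      simp only [Finset.mem_image, Finset.mem_filter, Finset.mem_univ, true_and] at hp hq
      obtain ⟨u, hu, rfl⟩ := hp; obtain ⟨w, hw, rfl⟩ := hq
      simp_all
    · intro u v huv
      simp only [decide_eq_true_eq] at huv
      rcases huv with ⟨h1, h2⟩ | ⟨h1, h2⟩ | ⟨h1, h2⟩
      · exact Or.inl ⟨(u, u), by simp [Finset.mem_image, Finset.mem_filter]; omega, rfl⟩
      · exact Or.inl ⟨(u, u), by simp [Finset.mem_image, Finset.mem_filter]; omega, rfl⟩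
      · exact Or.inr ⟨(v, v), by simp [Finset.mem_image, Finset.mem_filter]; omega, rfl⟩
    · rw [Finset.card_image_of_injective _ (fun a b h => congrArg Prod.fst h)]
      refine Eq.trans (card_filter_fin' (2*d-1) (fun x => x < d)) ?_
      have h2 : ((Finset.range (2*d-1)).filter (fun x => x < d))
          = Finset.range d := by
        ext x; simp only [Finset.mem_filter, Finset.mem_range]; omega
      rw [h2, Finset.card_range]
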